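/- Let AGG ∈ {SUM, MEAN, MAX}. If a vertex property is defined by a simple AGG-GNN with truncated ReLU activation ReLU*(x) = min(max(0,x),1), then it is also defined by a simple AGG-GNN with ReLU activation ReLU(x) = max(0,x). -/

import Mathlib

open scoped Classical

/-- A `α`-labeled finite directed graph. -/
structure LabeledGraph (α : Type) : Type 1 where
  V : Type
  [fintypeV : Fintype V]
  adj : V → V → Prop
  label : V → α → Prop

attribute [instance] LabeledGraph.fintypeV

namespace LabeledGraph

variable {α : Type}

/-- The neighborhood (set of successors) of a vertex. -/
def nbhd (G : LabeledGraph α) (v : G.V) : Set G.V := {u | G.adj v u}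

/-- The neighborhood of a vertex, as a finset. -/
noncomputable def nbhdFinset (G : LabeledGraph α) (v : G.V) : Finset G.V :=
  Finset.univ.filter (fun u => G.adj v u)

/-- The `c`-scaling of a graph: each vertex is multiplied `c` times. -/
def scale (G : LabeledGraph α) (c : ℕ) : LabeledGraph α where
  V := G.V × Fin c
  adj := fun p q => G.adj p.1 q.1
  label := fun p => G.label p.1

end LabeledGraph

/-- Formulas of modal logic ML. -/
inductive ML (α : Type) : Type where
  | atom : α → ML α
  | neg  : ML α → ML α
  | or   : ML α → ML α → ML α
  | dia  : ML α → ML α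

/-- Satisfaction for ML. -/
def ML.sat {α : Type} (G : LabeledGraph α) : ML α → G.V → Prop
  | .atom p, v => G.label v p
  | .neg φ, v => ¬ ML.sat G φ v
  | .or φ ψ, v => ML.sat G φ v ∨ ML.sat G ψ v
  | .dia φ, v => ∃ u, G.adj v u ∧ ML.sat G φ u

/-- Formulas of graded modal logic GML. -/
inductive GML (α : Type) : Type where
  | atom : α → GML α
  | neg  : GML α → GML α
  | or   : GML α → GML α → GML α
  | dia  : ℕ → GML α → GML α

/-- Satisfaction for GML: `dia n φ` is `◊^{≥n} φ`. -/
def GML.sat {α : Type} (G : LabeledGraph α) : GML α → G.V → Prop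
  | .atom p, v => G.label v p
  | .neg φ, v => ¬ GML.sat G φ v
  | .or φ ψ, v => GML.sat G φ v ∨ GML.sat G ψ v
  | .dia n φ, v => n ≤ {u | G.adj v u ∧ GML.sat G φ u}.ncard

/-- Formulas of ratio modal logic RML; diamonds carry a ratio `r ∈ [0,1]`. -/
inductive RML (α : Type) : Type where
  | atom  : α → RML α
  | neg   : RML α → RML α
  | or    : RML α → RML α → RML α
  | diaGe : Set.Icc (0:ℝ) 1 → RML α → RML α
  | diaGt : Set.Icc (0:ℝ) 1 → RML α → RML α

/-- Satisfaction for RML. If a vertex has no successors then `◊^{≥r}φ`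
holds and `◊^{>r}φ` fails; otherwise the fraction of successors satisfying
`φ` is compared with `r`. -/
noncomputable def RML.sat {α : Type} (G : LabeledGraph α) : RML α → G.V → Prop
  | .atom p, v => G.label v p
  | .neg φ, v => ¬ RML.sat G φ v
  | .or φ ψ, v => RML.sat G φ v ∨ RML.sat G ψ v
  | .diaGe r φ, v => (G.nbhd v).Nonempty →
      (r : ℝ) ≤ ({u | G.adj v u ∧ RML.sat G φ u}.ncard : ℝ) / ((G.nbhd v).ncard : ℝ)
  | .diaGt r φ, v => (G.nbhd v).Nonempty ∧
      (r : ℝ) < ({u | G.adj v u ∧ RML.sat G φ u}.ncard : ℝ) / ((G.nbhd v).ncard : ℝ)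

/-- Formulas of AFML[1] (diamond fragment of alternation-free modal logic). -/
inductive AFML1 (α : Type) : Type where
  | atom   : α → AFML1 α
  | natom  : α → AFML1 α
  | boxBot : AFML1 α
  | and    : AFML1 α → AFML1 α → AFML1 α
  | or     : AFML1 α → AFML1 α → AFML1 α
  | dia    : AFML1 α → AFML1 α

/-- Satisfaction for AFML[1]. -/
def AFML1.sat {α : Type} (G : LabeledGraph α) : AFML1 α → G.V → Prop
  | .atom p, v => G.label v p
  | .natom p, v => ¬ G.label v p
  | .boxBot, v => ∀ u, ¬ G.adj v u
  | .and φ ψ, v => AFML1.sat G φ v ∧ AFML1.sat G ψ v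
  | .or φ ψ, v => AFML1.sat G φ v ∨ AFML1.sat G ψ v
  | .dia φ, v => ∃ u, G.adj v u ∧ AFML1.sat G φ u

/-- Modal depth of an AFML[1] formula. -/
def AFML1.depth {α : Type} : AFML1 α → ℕ
  | .atom _ => 0
  | .natom _ => 0
  | .boxBot => 1
  | .and φ ψ => max (AFML1.depth φ) (AFML1.depth ψ)
  | .or φ ψ => max (AFML1.depth φ) (AFML1.depth ψ)
  | .dia φ => AFML1.depth φ + 1

/-- Formulas of AFML[2] (box fragment of alternation-free modal logic). -/
inductive AFML2 (α : Type) : Type where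
  | atom   : α → AFML2 α
  | natom  : α → AFML2 α
  | diaTop : AFML2 α
  | and    : AFML2 α → AFML2 α → AFML2 α
  | or     : AFML2 α → AFML2 α → AFML2 α
  | box    : AFML2 α → AFML2 α

/-- Satisfaction for AFML[2]. -/
def AFML2.sat {α : Type} (G : LabeledGraph α) : AFML2 α → G.V → Prop
  | .atom p, v => G.label v p
  | .natom p, v => ¬ G.label v p
  | .diaTop, v => ∃ u, G.adj v u
  | .and φ ψ, v => AFML2.sat G φ v ∧ AFML2.sat G ψ v
  | .or φ ψ, v => AFML2.sat G φ v ∨ AFML2.sat G ψ v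
  | .box φ, v => ∀ u, G.adj v u → AFML2.sat G φ u

/-- Alternation-free modal logic: AFML[1] formulas together with AFML[2] formulas. -/
def AFML (α : Type) : Type := AFML1 α ⊕ AFML2 α

/-- Satisfaction for AFML. -/
def AFML.sat {α : Type} (G : LabeledGraph α) : AFML α → G.V → Prop
  | .inl φ => AFML1.sat G φ
  | .inr φ => AFML2.sat G φ

/-- The three aggregation functions. -/
inductive Agg : Type where
  | sum : Agg
  | mean : Agg
  | max : Agg

/-- Apply an aggregation function componentwise to the (multiset of) values of `x`
over the finset `s`; empty aggregation yields `0` (so mean of the empty multiset is `0`). -/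
noncomputable def Agg.apply {V : Type} : Agg → Finset V → (V → ℝ) → ℝ
  | .sum, s, x => ∑ u ∈ s, x u
  | .mean, s, x => (∑ u ∈ s, x u) / (s.card : ℝ)
  | .max, s, x => if h : s.Nonempty then s.sup' h x else 0

/-- A GNN: `L` layers, dimensions `δ 0, …, δ L` with `δ 0 = |α|`,
combination functions `com ℓ : ℝ^{δ ℓ} × ℝ^{δ ℓ} → ℝ^{δ (ℓ+1)}` for `ℓ < L`,
and a threshold classification function `CLS(x) = 1 iff x_clsIdx ∼ clsThr`
where `∼` is `>` if `clsStrict` and `≥` otherwise. -/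
structure GNN (α : Type) [Fintype α] : Type where
  L : ℕ
  δ : ℕ → ℕ
  hδ0 : δ 0 = Fintype.card α
  com : (ℓ : ℕ) → (Fin (δ ℓ) → ℝ) → (Fin (δ ℓ) → ℝ) → (Fin (δ (ℓ+1)) → ℝ)
  clsIdx : Fin (δ L)
  clsStrict : Bool
  clsThr : ℝ

/-- The feature vector computed by a GNN (with aggregation `agg`) at layer `ℓ`
at vertex `v` of graph `G`. Layer 0 yields the 0/1 indicator vector of the labels. -/
noncomputable def GNN.feat {α : Type} [Fintype α] (𝒢 : GNN α) (agg : Agg)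
    (G : LabeledGraph α) : (ℓ : ℕ) → G.V → Fin (𝒢.δ ℓ) → ℝ
  | 0, v, i => if G.label v ((Fintype.equivFin α).symm (Fin.cast 𝒢.hδ0 i)) then 1 else 0
  | (ℓ+1), v, i =>
      𝒢.com ℓ (𝒢.feat agg G ℓ v)
        (fun j => agg.apply (G.nbhdFinset v) (fun u => 𝒢.feat agg G ℓ u j)) i

/-- The GNN accepts a pointed graph iff the classification function outputs 1 on
the final feature vector. -/
noncomputable def GNN.accepts {α : Type} [Fintype α] (𝒢 : GNN α) (agg : Agg)
    (G : LabeledGraph α) (v : G.V) : Prop :=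
  if 𝒢.clsStrict then 𝒢.clsThr < 𝒢.feat agg G 𝒢.L v 𝒢.clsIdx
  else 𝒢.clsThr ≤ 𝒢.feat agg G 𝒢.L v 𝒢.clsIdx

/-- A GNN is simple with activation function `f` if each combination function
has the form `COM(x_v, x_a) = f(x_v·C + x_a·A + b)` (componentwise `f`). -/
def GNN.IsSimple {α : Type} [Fintype α] (𝒢 : GNN α) (f : ℝ → ℝ) : Prop :=
  ∀ ℓ < 𝒢.L, ∃ (C A : Fin (𝒢.δ ℓ) → Fin (𝒢.δ (ℓ+1)) → ℝ) (b : Fin (𝒢.δ (ℓ+1)) → ℝ),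
    ∀ (xv xa : Fin (𝒢.δ ℓ) → ℝ) (i : Fin (𝒢.δ (ℓ+1))),
      𝒢.com ℓ xv xa i = f ((∑ j, xv j * C j i) + (∑ j, xa j * A j i) + b i)

/-- All combination functions of the GNN are continuous. -/
def GNN.HasContinuousCom {α : Type} [Fintype α] (𝒢 : GNN α) : Prop :=
  ∀ ℓ < 𝒢.L,
    Continuous (fun p : (Fin (𝒢.δ ℓ) → ℝ) × (Fin (𝒢.δ ℓ) → ℝ) => 𝒢.com ℓ p.1 p.2)

/-- Truncated ReLU. -/
noncomputable def reluStar : ℝ → ℝ := fun x => min (max 0 x) 1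

/-- ReLU. -/
noncomputable def relu : ℝ → ℝ := fun x => max 0 x

/-- Two pointed graphs have the same vertex labels at their distinguished vertices. -/
def labelsEq {α : Type} (G1 G2 : LabeledGraph α) (v1 : G1.V) (v2 : G2.V) : Prop :=
  ∀ p, G1.label v1 p ↔ G2.label v2 p

/-- Spoiler wins the `ℓ`-round ML game on `((G1,v1),(G2,v2))`. -/
def spoilerWinsML {α : Type} (G1 G2 : LabeledGraph α) : ℕ → G1.V → G2.V → Prop
  | 0, v1, v2 => ¬ labelsEq G1 G2 v1 v2
  | (ℓ+1), v1, v2 =>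
      ¬ labelsEq G1 G2 v1 v2
      ∨ (∃ u1, G1.adj v1 u1 ∧ ∀ u2, G2.adj v2 u2 → spoilerWinsML G1 G2 ℓ u1 u2)
      ∨ (∃ u2, G2.adj v2 u2 ∧ ∀ u1, G1.adj v1 u1 → spoilerWinsML G1 G2 ℓ u1 u2)

/-- Spoiler wins the `ℓ`-round AFML[1] game on `((G1,v1),(G2,v2))`. -/
def spoilerWinsAFML1 {α : Type} (G1 G2 : LabeledGraph α) : ℕ → G1.V → G2.V → Prop
  | 0, v1, v2 => ¬ labelsEq G1 G2 v1 v2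
  | (ℓ+1), v1, v2 =>
      ¬ labelsEq G1 G2 v1 v2
      ∨ ((∀ u, ¬ G1.adj v1 u) ∧ (∃ u, G2.adj v2 u))
      ∨ (∃ u1, G1.adj v1 u1 ∧ ∀ u2, G2.adj v2 u2 → spoilerWinsAFML1 G1 G2 ℓ u1 u2)

/-- Spoiler wins the `ℓ`-round GML game with counting bound `c` on `((G1,v1),(G2,v2))`. -/
def spoilerWinsGML {α : Type} (c : ℕ) (G1 G2 : LabeledGraph α) : ℕ → G1.V → G2.V → Prop
  | 0, v1, v2 => ¬ labelsEq G1 G2 v1 v2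
  | (ℓ+1), v1, v2 =>
      ¬ labelsEq G1 G2 v1 v2
      ∨ (∃ U1 : Finset G1.V, (∀ u ∈ U1, G1.adj v1 u) ∧ 0 < U1.card ∧ U1.card ≤ c ∧
          ((G2.nbhd v2).ncard < U1.card ∨
            ∀ U2 : Finset G2.V, (∀ u ∈ U2, G2.adj v2 u) → U2.card = U1.card →
              ∃ u2 ∈ U2, ∀ u1 ∈ U1, spoilerWinsGML c G1 G2 ℓ u1 u2))
      ∨ (∃ U2 : Finset G2.V, (∀ u ∈ U2, G2.adj v2 u) ∧ 0 < U2.card ∧ U2.card ≤ c ∧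
          ((G1.nbhd v1).ncard < U2.card ∨
            ∀ U1 : Finset G1.V, (∀ u ∈ U1, G1.adj v1 u) → U1.card = U2.card →
              ∃ u1 ∈ U1, ∀ u2 ∈ U2, spoilerWinsGML c G1 G2 ℓ u1 u2))

/-- The ratio `1/2` as an element of `[0,1]`. -/
noncomputable def half : Set.Icc (0:ℝ) 1 := ⟨1/2, by norm_num⟩

section Stmt0Aux

variable {α : Type} [Fintype α]

lemma relu_mono : Monotone relu := fun _ _ hab => max_le_max le_rfl hab

lemma relu_sub_relu (x : ℝ) : relu x - relu (x - 1) = reluStar x := by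
  unfold relu reluStar
  rcases le_total x 0 with h | h
  · have e1 : max 0 x = 0 := max_eq_left h
    have e2 : max 0 (x - 1) = 0 := max_eq_left (by linarith)
    rw [e1, e2]; norm_num
  · rcases le_total x 1 with h1 | h1
    · have e1 : max 0 x = x := max_eq_right h
      have e2 : max 0 (x - 1) = 0 := max_eq_left (by linarith)
      rw [e1, e2, min_eq_left h1]; ring
    · have e1 : max 0 x = x := max_eq_right h
      have e2 : max 0 (x - 1) = x - 1 := max_eq_right (by linarith)
      rw [e1, e2, min_eq_right h1]; ring

lemma reluStar_eq_min (x : ℝ) : reluStar x = min (relu x) 1 := rfl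

lemma sup'_map_mono {V : Type} (s : Finset V) (hs : s.Nonempty) (g : V → ℝ)
    (f : ℝ → ℝ) (hf : Monotone f) :
    s.sup' hs (fun u => f (g u)) = f (s.sup' hs g) := by
  apply le_antisymm
  · exact Finset.sup'_le _ _ fun u hu => hf (Finset.le_sup' g hu)
  · obtain ⟨b, hb, he⟩ := Finset.exists_mem_eq_sup' hs g
    rw [he]; exact Finset.le_sup' (fun u => f (g u)) hb

lemma sum_mul_indicator {n : ℕ} (x : Fin n → ℝ) (t : ℕ) (ht : t < n) :
    ∑ k, x k * (if (k : ℕ) = t then (1:ℝ) else 0) = x ⟨t, ht⟩ := by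
  rw [Finset.sum_eq_single (⟨t, ht⟩ : Fin n)]
  · simp
  · intro k _ hk
    have hne : (k : ℕ) ≠ t := by simpa [Fin.ext_iff] using hk
    simp [hne]
  · simp

/-- Dimensions of the new network. -/
def auxδ (𝒢 : GNN α) : ℕ → ℕ
  | 0 => 𝒢.δ 0
  | (ℓ+1) => 2 * 𝒢.δ (ℓ+1) + 1

lemma auxδ_pos (𝒢 : GNN α) {ℓ : ℕ} (hℓ : 0 < ℓ) : auxδ 𝒢 ℓ = 2 * 𝒢.δ ℓ + 1 := by
  cases ℓ with
  | zero => exact absurd hℓ (lt_irrefl 0)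
  | succ m => rfl

/-- Decoding matrix. -/
noncomputable def auxD (𝒢 : GNN α) : (ℓ : ℕ) → Fin (auxδ 𝒢 ℓ) → Fin (𝒢.δ ℓ) → ℝ
  | 0, k, j => if (k : ℕ) = (j : ℕ) then 1 else 0
  | (ℓ+1), k, j => (if (k : ℕ) = (j : ℕ) then (1:ℝ) else 0)
      - (if (k : ℕ) = 𝒢.δ (ℓ+1) + (j : ℕ) then 1 else 0)

lemma auxD_pos (𝒢 : GNN α) {ℓ : ℕ} (hℓ : 0 < ℓ) (k : Fin (auxδ 𝒢 ℓ)) (j : Fin (𝒢.δ ℓ)) :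
    auxD 𝒢 ℓ k j = (if (k : ℕ) = (j : ℕ) then (1:ℝ) else 0)
      - (if (k : ℕ) = 𝒢.δ ℓ + (j : ℕ) then 1 else 0) := by
  cases ℓ with
  | zero => exact absurd hℓ (lt_irrefl 0)
  | succ m => rfl

lemma auxD_sum_zero (𝒢 : GNN α) (x : Fin (auxδ 𝒢 0) → ℝ) (j : Fin (𝒢.δ 0))
    (hk : (j : ℕ) < auxδ 𝒢 0) :
    ∑ k, x k * auxD 𝒢 0 k j = x ⟨j, hk⟩ :=
  sum_mul_indicator x (j : ℕ) hk

lemma auxD_sum_pos (𝒢 : GNN α) {ℓ : ℕ} (hℓ : 0 < ℓ) (x : Fin (auxδ 𝒢 ℓ) → ℝ)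
    (j : Fin (𝒢.δ ℓ)) (hk1 : (j : ℕ) < auxδ 𝒢 ℓ) (hk2 : 𝒢.δ ℓ + (j : ℕ) < auxδ 𝒢 ℓ) :
    ∑ k, x k * auxD 𝒢 ℓ k j = x ⟨j, hk1⟩ - x ⟨𝒢.δ ℓ + (j : ℕ), hk2⟩ := by
  simp only [auxD_pos 𝒢 hℓ, mul_sub]
  rw [Finset.sum_sub_distrib, sum_mul_indicator x (j : ℕ) hk1,
    sum_mul_indicator x (𝒢.δ ℓ + (j : ℕ)) hk2]

/-- The matrices of the new network, obtained from a matrix family `C` of the old one. -/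
noncomputable def auxM (𝒢 : GNN α) (C : (ℓ : ℕ) → Fin (𝒢.δ ℓ) → Fin (𝒢.δ (ℓ+1)) → ℝ)
    (ℓ : ℕ) (k : Fin (auxδ 𝒢 ℓ)) (i : Fin (auxδ 𝒢 (ℓ+1))) : ℝ :=
  if h1 : (i : ℕ) < 𝒢.δ (ℓ+1) then ∑ j, auxD 𝒢 ℓ k j * C ℓ j ⟨i, h1⟩
  else if h2 : (i : ℕ) < 2 * 𝒢.δ (ℓ+1) then
    ∑ j, auxD 𝒢 ℓ k j * C ℓ j ⟨(i : ℕ) - 𝒢.δ (ℓ+1), by omega⟩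
  else 0

/-- The bias of the new network. -/
noncomputable def auxb (𝒢 : GNN α) (b : (ℓ : ℕ) → Fin (𝒢.δ (ℓ+1)) → ℝ)
    (ℓ : ℕ) (i : Fin (auxδ 𝒢 (ℓ+1))) : ℝ :=
  if h1 : (i : ℕ) < 𝒢.δ (ℓ+1) then b ℓ ⟨i, h1⟩
  else if h2 : (i : ℕ) < 2 * 𝒢.δ (ℓ+1) then b ℓ ⟨(i : ℕ) - 𝒢.δ (ℓ+1), by omega⟩ - 1
  else 0

/-- The new network. -/
noncomputable def auxGNN (𝒢 : GNN α)
    (C A : (ℓ : ℕ) → Fin (𝒢.δ ℓ) → Fin (𝒢.δ (ℓ+1)) → ℝ)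
    (b : (ℓ : ℕ) → Fin (𝒢.δ (ℓ+1)) → ℝ) (idx' : Fin (auxδ 𝒢 𝒢.L)) : GNN α where
  L := 𝒢.L
  δ := auxδ 𝒢
  hδ0 := 𝒢.hδ0
  com := fun ℓ xv xa i =>
    relu ((∑ k, xv k * auxM 𝒢 C ℓ k i) + (∑ k, xa k * auxM 𝒢 A ℓ k i) + auxb 𝒢 b ℓ i)
  clsIdx := idx'
  clsStrict := 𝒢.clsStrict
  clsThr := 𝒢.clsThr

lemma auxM_sum_lt (𝒢 : GNN α) (C : (ℓ : ℕ) → Fin (𝒢.δ ℓ) → Fin (𝒢.δ (ℓ+1)) → ℝ)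
    (ℓ : ℕ) (x : Fin (auxδ 𝒢 ℓ) → ℝ) (i : Fin (auxδ 𝒢 (ℓ+1))) (h1 : (i : ℕ) < 𝒢.δ (ℓ+1)) :
    ∑ k, x k * auxM 𝒢 C ℓ k i = ∑ j, (∑ k, x k * auxD 𝒢 ℓ k j) * C ℓ j ⟨i, h1⟩ := by
  simp only [auxM, dif_pos h1, Finset.mul_sum]
  rw [Finset.sum_comm]
  refine Finset.sum_congr rfl fun j _ => ?_
  rw [Finset.sum_mul]
  exact Finset.sum_congr rfl fun k _ => by ring

lemma auxM_sum_mid (𝒢 : GNN α) (C : (ℓ : ℕ) → Fin (𝒢.δ ℓ) → Fin (𝒢.δ (ℓ+1)) → ℝ)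
    (ℓ : ℕ) (x : Fin (auxδ 𝒢 ℓ) → ℝ) (i : Fin (auxδ 𝒢 (ℓ+1)))
    (h1 : ¬ (i : ℕ) < 𝒢.δ (ℓ+1)) (h2 : (i : ℕ) < 2 * 𝒢.δ (ℓ+1)) :
    ∑ k, x k * auxM 𝒢 C ℓ k i
      = ∑ j, (∑ k, x k * auxD 𝒢 ℓ k j) * C ℓ j ⟨(i : ℕ) - 𝒢.δ (ℓ+1), by omega⟩ := by
  simp only [auxM, dif_neg h1, dif_pos h2, Finset.mul_sum]
  rw [Finset.sum_comm]
  refine Finset.sum_congr rfl fun j _ => ?_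
  rw [Finset.sum_mul]
  exact Finset.sum_congr rfl fun k _ => by ring

lemma auxM_sum_last (𝒢 : GNN α) (C : (ℓ : ℕ) → Fin (𝒢.δ ℓ) → Fin (𝒢.δ (ℓ+1)) → ℝ)
    (ℓ : ℕ) (x : Fin (auxδ 𝒢 ℓ) → ℝ) (i : Fin (auxδ 𝒢 (ℓ+1)))
    (h2 : ¬ (i : ℕ) < 2 * 𝒢.δ (ℓ+1)) :
    ∑ k, x k * auxM 𝒢 C ℓ k i = 0 := by
  have h1 : ¬ (i : ℕ) < 𝒢.δ (ℓ+1) := by omega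
  simp [auxM, dif_neg h1, dif_neg h2]

lemma aux_feat_zero (𝒢 : GNN α)
    (C A : (ℓ : ℕ) → Fin (𝒢.δ ℓ) → Fin (𝒢.δ (ℓ+1)) → ℝ)
    (b : (ℓ : ℕ) → Fin (𝒢.δ (ℓ+1)) → ℝ) (idx' : Fin (auxδ 𝒢 𝒢.L))
    (agg : Agg) (G : LabeledGraph α) (u : G.V) (k : Fin (auxδ 𝒢 0)) :
    (auxGNN 𝒢 C A b idx').feat agg G 0 u k = 𝒢.feat agg G 0 u ⟨k, k.isLt⟩ := rfl

end Stmt0Aux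

section Stmt0Inv

variable {α : Type} [Fintype α]

lemma aux_feat_succ (𝒢 : GNN α)
    (C A : (ℓ : ℕ) → Fin (𝒢.δ ℓ) → Fin (𝒢.δ (ℓ+1)) → ℝ)
    (b : (ℓ : ℕ) → Fin (𝒢.δ (ℓ+1)) → ℝ) (idx' : Fin (auxδ 𝒢 𝒢.L))
    (agg : Agg) (G : LabeledGraph α) (ℓ : ℕ) (v : G.V) (i : Fin (auxδ 𝒢 (ℓ+1))) :
    (auxGNN 𝒢 C A b idx').feat agg G (ℓ+1) v i
      = relu ((∑ k : Fin (auxδ 𝒢 ℓ), (auxGNN 𝒢 C A b idx').feat agg G ℓ v k * auxM 𝒢 C ℓ k i)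
        + (∑ k : Fin (auxδ 𝒢 ℓ), (agg.apply (G.nbhdFinset v)
            fun u => (auxGNN 𝒢 C A b idx').feat agg G ℓ u k) * auxM 𝒢 A ℓ k i)
        + auxb 𝒢 b ℓ i) := rfl

lemma aux_invariant (𝒢 : GNN α)
    (C A : (ℓ : ℕ) → Fin (𝒢.δ ℓ) → Fin (𝒢.δ (ℓ+1)) → ℝ)
    (b : (ℓ : ℕ) → Fin (𝒢.δ (ℓ+1)) → ℝ) (idx' : Fin (auxδ 𝒢 𝒢.L))
    (agg : Agg) (G : LabeledGraph α)
    (hCAb : ∀ ℓ, ℓ < 𝒢.L → ∀ (xv xa : Fin (𝒢.δ ℓ) → ℝ) (i : Fin (𝒢.δ (ℓ+1))),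
      𝒢.com ℓ xv xa i
        = reluStar ((∑ j, xv j * C ℓ j i) + (∑ j, xa j * A ℓ j i) + b ℓ i)) :
    ∀ ℓ, ℓ ≤ 𝒢.L → 1 ≤ ℓ → ∀ v : G.V,
    ∃ z : Fin (𝒢.δ ℓ) → ℝ,
      (∀ (j : Fin (𝒢.δ ℓ)) (hk : (j : ℕ) < auxδ 𝒢 ℓ),
        (auxGNN 𝒢 C A b idx').feat agg G ℓ v ⟨j, hk⟩ = relu (z j)) ∧
      (∀ (j : Fin (𝒢.δ ℓ)) (hk : 𝒢.δ ℓ + (j : ℕ) < auxδ 𝒢 ℓ),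
        (auxGNN 𝒢 C A b idx').feat agg G ℓ v ⟨𝒢.δ ℓ + (j : ℕ), hk⟩ = relu (z j - 1)) ∧
      (∀ hk : 2 * 𝒢.δ ℓ < auxδ 𝒢 ℓ,
        (auxGNN 𝒢 C A b idx').feat agg G ℓ v ⟨2 * 𝒢.δ ℓ, hk⟩ = 0) ∧
      (∀ j, 𝒢.feat agg G ℓ v j = reluStar (z j)) := by
  intro ℓ
  induction ℓ with
  | zero => omega
  | succ ℓ IH =>
    intro hle _ v
    have hℓL : ℓ < 𝒢.L := hle
    -- decoding facts
    have Hdec : ∀ (u : G.V) (j : Fin (𝒢.δ ℓ)),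
        ∑ k : Fin (auxδ 𝒢 ℓ), (auxGNN 𝒢 C A b idx').feat agg G ℓ u k * auxD 𝒢 ℓ k j
          = 𝒢.feat agg G ℓ u j := by
      rcases Nat.eq_zero_or_pos ℓ with rfl | hpos
      · intro u j
        erw [auxD_sum_zero 𝒢 _ j j.isLt, aux_feat_zero]
      · intro u j
        have e := auxδ_pos 𝒢 hpos
        have hk1 : (j : ℕ) < auxδ 𝒢 ℓ := by have := j.isLt; omega
        have hk2 : 𝒢.δ ℓ + (j : ℕ) < auxδ 𝒢 ℓ := by have := j.isLt; omega
        obtain ⟨z, hz1, hz2, _, hz4⟩ := IH (by omega) hpos u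
        erw [auxD_sum_pos 𝒢 hpos _ j hk1 hk2, hz1 j hk1, hz2 j hk2,
          relu_sub_relu, hz4]
    have Hagg : ∀ (j : Fin (𝒢.δ ℓ)),
        ∑ k : Fin (auxδ 𝒢 ℓ), (agg.apply (G.nbhdFinset v)
            fun u => (auxGNN 𝒢 C A b idx').feat agg G ℓ u k) * auxD 𝒢 ℓ k j
          = agg.apply (G.nbhdFinset v) fun u => 𝒢.feat agg G ℓ u j := by
      rcases Nat.eq_zero_or_pos ℓ with rfl | hpos
      · intro j
        rw [auxD_sum_zero 𝒢 _ j j.isLt]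
        exact congrArg _ (funext fun u => aux_feat_zero 𝒢 C A b idx' agg G u _)
      · intro j
        have e := auxδ_pos 𝒢 hpos
        have hk1 : (j : ℕ) < auxδ 𝒢 ℓ := by have := j.isLt; omega
        have hk2 : 𝒢.δ ℓ + (j : ℕ) < auxδ 𝒢 ℓ := by have := j.isLt; omega
        choose z hz1 hz2 hz3 hz4 using fun u => IH (by omega) hpos u
        rw [auxD_sum_pos 𝒢 hpos _ j hk1 hk2]
        have e1 : (fun u => (auxGNN 𝒢 C A b idx').feat agg G ℓ u ⟨(j : ℕ), hk1⟩)
            = fun u => relu (z u j) := funext fun u => hz1 u j hk1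
        have e2 : (fun u => (auxGNN 𝒢 C A b idx').feat agg G ℓ u ⟨𝒢.δ ℓ + (j : ℕ), hk2⟩)
            = fun u => relu (z u j - 1) := funext fun u => hz2 u j hk2
        have e4 : (fun u => 𝒢.feat agg G ℓ u j)
            = fun u => reluStar (z u j) := funext fun u => hz4 u j
        erw [e1, e2, e4]
        cases agg with
        | sum =>
          show (∑ u ∈ G.nbhdFinset v, relu (z u j))
              - (∑ u ∈ G.nbhdFinset v, relu (z u j - 1))
            = ∑ u ∈ G.nbhdFinset v, reluStar (z u j)
          rw [← Finset.sum_sub_distrib]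
          exact Finset.sum_congr rfl fun u _ => relu_sub_relu (z u j)
        | mean =>
          show (∑ u ∈ G.nbhdFinset v, relu (z u j)) / _
              - (∑ u ∈ G.nbhdFinset v, relu (z u j - 1)) / _
            = (∑ u ∈ G.nbhdFinset v, reluStar (z u j)) / _
          rw [div_sub_div_same, ← Finset.sum_sub_distrib]
          congr 1
          exact Finset.sum_congr rfl fun u _ => relu_sub_relu (z u j)
        | max =>
          by_cases hne : (G.nbhdFinset v).Nonempty
          · simp only [Agg.apply, dif_pos hne]
            rw [sup'_map_mono _ hne (fun u => z u j) relu relu_mono,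
              sup'_map_mono _ hne (fun u => z u j)
                (fun x => relu (x - 1)) (fun a b hab => relu_mono (by linarith)),
              sup'_map_mono _ hne (fun u => z u j) reluStar
                (fun a b hab => min_le_min (max_le_max le_rfl hab) le_rfl)]
            exact relu_sub_relu _
          · simp only [Agg.apply, dif_neg hne]
            ring
    -- now compute layer ℓ+1
    refine ⟨fun j => (∑ j', 𝒢.feat agg G ℓ v j' * C ℓ j' j)
        + (∑ j', (agg.apply (G.nbhdFinset v) fun u => 𝒢.feat agg G ℓ u j') * A ℓ j' j)
        + b ℓ j, ?_, ?_, ?_, ?_⟩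
    · intro j hk
      have h1 : ((⟨(j : ℕ), hk⟩ : Fin (auxδ 𝒢 (ℓ+1))) : ℕ) < 𝒢.δ (ℓ+1) := j.isLt
      erw [aux_feat_succ, auxM_sum_lt 𝒢 C ℓ _ _ h1, auxM_sum_lt 𝒢 A ℓ _ _ h1]
      have hj : (⟨((⟨(j : ℕ), hk⟩ : Fin (auxδ 𝒢 (ℓ+1))) : ℕ), h1⟩ : Fin (𝒢.δ (ℓ+1))) = j :=
        Fin.ext rfl
      rw [hj]
      have ed : (∑ j', (∑ k : Fin (auxδ 𝒢 ℓ), (auxGNN 𝒢 C A b idx').feat agg G ℓ v k * auxD 𝒢 ℓ k j')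
            * C ℓ j' j)
          = ∑ j', 𝒢.feat agg G ℓ v j' * C ℓ j' j :=
        Finset.sum_congr rfl fun j' _ => by rw [Hdec v j']
      have ea : (∑ j', (∑ k : Fin (auxδ 𝒢 ℓ), (agg.apply (G.nbhdFinset v)
              fun u => (auxGNN 𝒢 C A b idx').feat agg G ℓ u k) * auxD 𝒢 ℓ k j')
            * A ℓ j' j)
          = ∑ j', (agg.apply (G.nbhdFinset v) fun u => 𝒢.feat agg G ℓ u j') * A ℓ j' j :=
        Finset.sum_congr rfl fun j' _ => by rw [Hagg j']
      rw [ed, ea]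
      simp only [auxb, dif_pos h1, hj]
    · intro j hk
      have h1 : ¬ ((⟨𝒢.δ (ℓ+1) + (j : ℕ), hk⟩ : Fin (auxδ 𝒢 (ℓ+1))) : ℕ) < 𝒢.δ (ℓ+1) := by
        simp
      have h2 : ((⟨𝒢.δ (ℓ+1) + (j : ℕ), hk⟩ : Fin (auxδ 𝒢 (ℓ+1))) : ℕ) < 2 * 𝒢.δ (ℓ+1) := by
        have := j.isLt; simp; omega
      erw [aux_feat_succ, auxM_sum_mid 𝒢 C ℓ _ _ h1 h2, auxM_sum_mid 𝒢 A ℓ _ _ h1 h2]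
      have hj : (⟨((⟨𝒢.δ (ℓ+1) + (j : ℕ), hk⟩ : Fin (auxδ 𝒢 (ℓ+1))) : ℕ) - 𝒢.δ (ℓ+1),
          by omega⟩ : Fin (𝒢.δ (ℓ+1))) = j := Fin.ext (by simp)
      rw [hj]
      have ed : (∑ j', (∑ k : Fin (auxδ 𝒢 ℓ), (auxGNN 𝒢 C A b idx').feat agg G ℓ v k * auxD 𝒢 ℓ k j')
            * C ℓ j' j)
          = ∑ j', 𝒢.feat agg G ℓ v j' * C ℓ j' j :=
        Finset.sum_congr rfl fun j' _ => by rw [Hdec v j']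
      have ea : (∑ j', (∑ k : Fin (auxδ 𝒢 ℓ), (agg.apply (G.nbhdFinset v)
              fun u => (auxGNN 𝒢 C A b idx').feat agg G ℓ u k) * auxD 𝒢 ℓ k j')
            * A ℓ j' j)
          = ∑ j', (agg.apply (G.nbhdFinset v) fun u => 𝒢.feat agg G ℓ u j') * A ℓ j' j :=
        Finset.sum_congr rfl fun j' _ => by rw [Hagg j']
      rw [ed, ea]
      simp only [auxb, dif_neg h1, dif_pos h2, hj]
      congr 1
      ring
    · intro hk
      have h2 : ¬ ((⟨2 * 𝒢.δ (ℓ+1), hk⟩ : Fin (auxδ 𝒢 (ℓ+1))) : ℕ) < 2 * 𝒢.δ (ℓ+1) := by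
        simp
      have h1 : ¬ ((⟨2 * 𝒢.δ (ℓ+1), hk⟩ : Fin (auxδ 𝒢 (ℓ+1))) : ℕ) < 𝒢.δ (ℓ+1) := by
        simp; omega
      erw [aux_feat_succ, auxM_sum_last 𝒢 C ℓ _ _ h2, auxM_sum_last 𝒢 A ℓ _ _ h2]
      simp only [auxb, dif_neg h1, dif_neg h2]
      simp [relu]
    · intro j
      show 𝒢.com ℓ (𝒢.feat agg G ℓ v)
          (fun k => agg.apply (G.nbhdFinset v) fun u => 𝒢.feat agg G ℓ u k) j = _
      rw [hCAb ℓ hℓL]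

end Stmt0Inv

/-- For AGG ∈ {SUM, MEAN, MAX}: if a vertex property is defined by a
simple AGG-GNN with truncated ReLU activation, then it is also defined by a simple
AGG-GNN with ReLU activation. -/
theorem stmt0 {α : Type} [Fintype α] (agg : Agg) (𝒢 : GNN α) (h : 𝒢.IsSimple reluStar) :
    ∃ 𝒢' : GNN α, 𝒢'.IsSimple relu ∧
      ∀ (G : LabeledGraph α) (v : G.V), (𝒢'.accepts agg G v ↔ 𝒢.accepts agg G v) := by
  by_cases hL0 : 𝒢.L = 0
  · exact ⟨𝒢, fun ℓ hℓ => absurd hℓ (by omega), fun G v => Iff.rfl⟩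
  · have h' := h
    unfold GNN.IsSimple at h'
    choose C0 A0 b0 hCAb0 using h'
    set Ct : (ℓ : ℕ) → Fin (𝒢.δ ℓ) → Fin (𝒢.δ (ℓ+1)) → ℝ :=
      fun ℓ => if hh : ℓ < 𝒢.L then C0 ℓ hh else fun _ _ => 0 with hCt
    set At : (ℓ : ℕ) → Fin (𝒢.δ ℓ) → Fin (𝒢.δ (ℓ+1)) → ℝ :=
      fun ℓ => if hh : ℓ < 𝒢.L then A0 ℓ hh else fun _ _ => 0 with hAt
    set bt : (ℓ : ℕ) → Fin (𝒢.δ (ℓ+1)) → ℝ :=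
      fun ℓ => if hh : ℓ < 𝒢.L then b0 ℓ hh else fun _ => 0 with hbt
    have hCAb : ∀ ℓ, ℓ < 𝒢.L → ∀ (xv xa : Fin (𝒢.δ ℓ) → ℝ) (i : Fin (𝒢.δ (ℓ+1))),
        𝒢.com ℓ xv xa i
          = reluStar ((∑ j, xv j * Ct ℓ j i) + (∑ j, xa j * At ℓ j i) + bt ℓ i) := by
      intro ℓ hℓ xv xa i
      rw [hCt, hAt, hbt]
      simp only [dif_pos hℓ]
      exact hCAb0 ℓ hℓ xv xa i
    have hδL : auxδ 𝒢 𝒢.L = 2 * 𝒢.δ 𝒢.L + 1 := auxδ_pos 𝒢 (by omega)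
    have hsimple : ∀ idx' : Fin (auxδ 𝒢 𝒢.L),
        (auxGNN 𝒢 Ct At bt idx').IsSimple relu :=
      fun idx' ℓ _ => ⟨auxM 𝒢 Ct ℓ, auxM 𝒢 At ℓ, auxb 𝒢 bt ℓ, fun xv xa i => rfl⟩
    have hkk : (𝒢.clsIdx : ℕ) < auxδ 𝒢 𝒢.L := by have := 𝒢.clsIdx.isLt; omega
    have hlast : 2 * 𝒢.δ 𝒢.L < auxδ 𝒢 𝒢.L := by omega
    cases hs : 𝒢.clsStrict with
    | true =>
      by_cases hthr : 𝒢.clsThr < 1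
      · -- use the first copy of the classification coordinate
        refine ⟨auxGNN 𝒢 Ct At bt ⟨(𝒢.clsIdx : ℕ), hkk⟩, hsimple _, fun G v => ?_⟩
        obtain ⟨z, hz1, hz2, hz3, hz4⟩ :=
          aux_invariant 𝒢 Ct At bt ⟨(𝒢.clsIdx : ℕ), hkk⟩ agg G hCAb 𝒢.L le_rfl (by omega) v
        have hA : (auxGNN 𝒢 Ct At bt ⟨(𝒢.clsIdx : ℕ), hkk⟩).accepts agg G v
            ↔ 𝒢.clsThr < relu (z 𝒢.clsIdx) := by
          unfold GNN.accepts
          rw [show (auxGNN 𝒢 Ct At bt ⟨(𝒢.clsIdx : ℕ), hkk⟩).clsStrict = true from hs,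
            show (auxGNN 𝒢 Ct At bt ⟨(𝒢.clsIdx : ℕ), hkk⟩).feat agg G
              (auxGNN 𝒢 Ct At bt ⟨(𝒢.clsIdx : ℕ), hkk⟩).L v
              (auxGNN 𝒢 Ct At bt ⟨(𝒢.clsIdx : ℕ), hkk⟩).clsIdx = relu (z 𝒢.clsIdx)
              from hz1 𝒢.clsIdx hkk]
          simp only [eq_self_iff_true, if_true]
          exact Iff.rfl
        have hB : 𝒢.accepts agg G v ↔ 𝒢.clsThr < reluStar (z 𝒢.clsIdx) := by
          unfold GNN.accepts
          rw [hs, hz4 𝒢.clsIdx]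
          simp
        rw [hA, hB, reluStar_eq_min, lt_min_iff]
        exact ⟨fun hh => ⟨hh, hthr⟩, fun hh => hh.1⟩
      · -- never accepts: use the constant-zero coordinate
        refine ⟨auxGNN 𝒢 Ct At bt ⟨2 * 𝒢.δ 𝒢.L, hlast⟩, hsimple _, fun G v => ?_⟩
        obtain ⟨z, hz1, hz2, hz3, hz4⟩ :=
          aux_invariant 𝒢 Ct At bt ⟨2 * 𝒢.δ 𝒢.L, hlast⟩ agg G hCAb 𝒢.L le_rfl (by omega) v
        have hA : (auxGNN 𝒢 Ct At bt ⟨2 * 𝒢.δ 𝒢.L, hlast⟩).accepts agg G v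
            ↔ 𝒢.clsThr < 0 := by
          unfold GNN.accepts
          rw [show (auxGNN 𝒢 Ct At bt ⟨2 * 𝒢.δ 𝒢.L, hlast⟩).clsStrict = true from hs,
            show (auxGNN 𝒢 Ct At bt ⟨2 * 𝒢.δ 𝒢.L, hlast⟩).feat agg G
              (auxGNN 𝒢 Ct At bt ⟨2 * 𝒢.δ 𝒢.L, hlast⟩).L v
              (auxGNN 𝒢 Ct At bt ⟨2 * 𝒢.δ 𝒢.L, hlast⟩).clsIdx = 0
              from hz3 hlast]
          simp only [eq_self_iff_true, if_true]
          exact Iff.rfl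
        have hB : 𝒢.accepts agg G v ↔ 𝒢.clsThr < reluStar (z 𝒢.clsIdx) := by
          unfold GNN.accepts
          rw [hs, hz4 𝒢.clsIdx]
          simp
        rw [hA, hB, reluStar_eq_min, lt_min_iff]
        push_neg at hthr
        constructor
        · intro hh; linarith
        · intro hh; linarith [hh.2]
    | false =>
      by_cases hthr : 𝒢.clsThr ≤ 1
      · refine ⟨auxGNN 𝒢 Ct At bt ⟨(𝒢.clsIdx : ℕ), hkk⟩, hsimple _, fun G v => ?_⟩
        obtain ⟨z, hz1, hz2, hz3, hz4⟩ :=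
          aux_invariant 𝒢 Ct At bt ⟨(𝒢.clsIdx : ℕ), hkk⟩ agg G hCAb 𝒢.L le_rfl (by omega) v
        have hA : (auxGNN 𝒢 Ct At bt ⟨(𝒢.clsIdx : ℕ), hkk⟩).accepts agg G v
            ↔ 𝒢.clsThr ≤ relu (z 𝒢.clsIdx) := by
          unfold GNN.accepts
          rw [show (auxGNN 𝒢 Ct At bt ⟨(𝒢.clsIdx : ℕ), hkk⟩).clsStrict = false from hs,
            show (auxGNN 𝒢 Ct At bt ⟨(𝒢.clsIdx : ℕ), hkk⟩).feat agg G
              (auxGNN 𝒢 Ct At bt ⟨(𝒢.clsIdx : ℕ), hkk⟩).L v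
              (auxGNN 𝒢 Ct At bt ⟨(𝒢.clsIdx : ℕ), hkk⟩).clsIdx = relu (z 𝒢.clsIdx)
              from hz1 𝒢.clsIdx hkk]
          rw [if_neg (by simp)]
          exact Iff.rfl
        have hB : 𝒢.accepts agg G v ↔ 𝒢.clsThr ≤ reluStar (z 𝒢.clsIdx) := by
          unfold GNN.accepts
          rw [hs, hz4 𝒢.clsIdx]
          simp
        rw [hA, hB, reluStar_eq_min, le_min_iff]
        exact ⟨fun hh => ⟨hh, hthr⟩, fun hh => hh.1⟩
      · refine ⟨auxGNN 𝒢 Ct At bt ⟨2 * 𝒢.δ 𝒢.L, hlast⟩, hsimple _, fun G v => ?_⟩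
        obtain ⟨z, hz1, hz2, hz3, hz4⟩ :=
          aux_invariant 𝒢 Ct At bt ⟨2 * 𝒢.δ 𝒢.L, hlast⟩ agg G hCAb 𝒢.L le_rfl (by omega) v
        have hA : (auxGNN 𝒢 Ct At bt ⟨2 * 𝒢.δ 𝒢.L, hlast⟩).accepts agg G v
            ↔ 𝒢.clsThr ≤ 0 := by
          unfold GNN.accepts
          rw [show (auxGNN 𝒢 Ct At bt ⟨2 * 𝒢.δ 𝒢.L, hlast⟩).clsStrict = false from hs,
            show (auxGNN 𝒢 Ct At bt ⟨2 * 𝒢.δ 𝒢.L, hlast⟩).feat agg G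
              (auxGNN 𝒢 Ct At bt ⟨2 * 𝒢.δ 𝒢.L, hlast⟩).L v
              (auxGNN 𝒢 Ct At bt ⟨2 * 𝒢.δ 𝒢.L, hlast⟩).clsIdx = 0
              from hz3 hlast]
          rw [if_neg (by simp)]
          exact Iff.rfl
        have hB : 𝒢.accepts agg G v ↔ 𝒢.clsThr ≤ reluStar (z 𝒢.clsIdx) := by
          unfold GNN.accepts
          rw [hs, hz4 𝒢.clsIdx]
          simp
        rw [hA, hB, reluStar_eq_min, le_min_iff]
        push_neg at hthr
        constructor
        · intro hh; linarith
        · intro hh; linarith [hh.2]
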